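/- Let Σ be a graded alphabet and t a tree in T_Σ. The sequential subtree automaton seq(A_t) associated with t is isomorphic (as an RWTA) to the quotient (A_t)_{∼_h} of the subtree automaton A_t by the relation ∼_h. -/
import Mathlib


/-- A tree over a graded alphabet `σ` with arity function `ar`. -/
inductive GTree (σ : Type) (ar : σ → ℕ) : Type
  | node (f : σ) (ts : Fin (ar f) → GTree σ ar) : GTree σ ar

/-- A root-weighted tree automaton (RWTA) over the graded alphabet `σ`
with weights in `M`. -/
structure RWTA (σ : Type) (ar : σ → ℕ) (M : Type) where
  Q : Type
  fin : Finite Q := by infer_instance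
  ν : Q → M
  δ : ∀ f : σ, (Fin (ar f) → Q) → Q → Prop

attribute [instance] RWTA.fin

variable {σ : Type} {ar : σ → ℕ} {M : Type}

/-- The reachability map `Δ_A`. -/
def RWTA.Delta (A : RWTA σ ar M) : GTree σ ar → Set A.Q
  | .node f ts => {q | ∃ qs : Fin (ar f) → A.Q,
      (∀ i, qs i ∈ A.Delta (ts i)) ∧ A.δ f qs q}

/-- The tree series realized by an RWTA: `P_A(t) = ν(Δ_A(t))`. -/
noncomputable def RWTA.P [AddCommMonoid M] (A : RWTA σ ar M) (t : GTree σ ar) : M :=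
  ∑ᶠ q ∈ A.Delta t, A.ν q

/-- An RWTA is sequential when `Card (Δ_A(t)) ≤ 1` for every tree. -/
def RWTA.Sequential (A : RWTA σ ar M) : Prop :=
  ∀ t : GTree σ ar, (A.Delta t).Subsingleton

/-- The down language of a state. -/
def RWTA.DownLang (A : RWTA σ ar M) (q : A.Q) : Set (GTree σ ar) :=
  {t | q ∈ A.Delta t}

/-- The sequential RWTA associated with `A` by the subset construction. -/
noncomputable def RWTA.subset [AddCommMonoid M] (A : RWTA σ ar M) : RWTA σ ar M where
  Q := Set A.Q
  ν := fun S => ∑ᶠ q ∈ S, A.ν q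
  δ := fun f Qs S =>
    S = {q | ∃ qs : Fin (ar f) → A.Q, (∀ i, qs i ∈ Qs i) ∧ A.δ f qs q}

/-- The accessible part of an RWTA. -/
def RWTA.acc (A : RWTA σ ar M) : RWTA σ ar M where
  Q := {q : A.Q // (A.DownLang q).Nonempty}
  ν := fun q => A.ν q.1
  δ := fun f qs q => A.δ f (fun i => (qs i).1) q.1

/-- The sum of two RWTAs (on the disjoint union of the state sets). -/
def RWTA.sum (A₁ A₂ : RWTA σ ar M) : RWTA σ ar M where
  Q := A₁.Q ⊕ A₂.Q
  ν := Sum.elim A₁.ν A₂.ν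
  δ := fun f qs q =>
    (∃ (qs' : Fin (ar f) → A₁.Q) (q' : A₁.Q),
        q = Sum.inl q' ∧ (∀ i, qs i = Sum.inl (qs' i)) ∧ A₁.δ f qs' q') ∨
    (∃ (qs' : Fin (ar f) → A₂.Q) (q' : A₂.Q),
        q = Sum.inr q' ∧ (∀ i, qs i = Sum.inr (qs' i)) ∧ A₂.δ f qs' q')

/-- The product of two RWTAs. -/
def RWTA.prod [Mul M] (A₁ A₂ : RWTA σ ar M) : RWTA σ ar M where
  Q := A₁.Q × A₂.Q
  ν := fun q => A₁.ν q.1 * A₂.ν q.2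
  δ := fun f qs q =>
    A₁.δ f (fun i => (qs i).1) q.1 ∧ A₂.δ f (fun i => (qs i).2) q.2

/-- The quotient of an RWTA by an equivalence relation on its states. -/
noncomputable def RWTA.quot [AddCommMonoid M] (A : RWTA σ ar M) (s : Setoid A.Q) :
    RWTA σ ar M where
  Q := Quotient s
  ν := fun C => ∑ᶠ q ∈ {q : A.Q | Quotient.mk s q = C}, A.ν q
  δ := fun f Cs C => ∃ (qs : Fin (ar f) → A.Q) (q : A.Q),
    (∀ i, Quotient.mk s (qs i) = Cs i) ∧ Quotient.mk s q = C ∧ A.δ f qs q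

/-- Relabelling of trees along a rank-preserving map of symbols. -/
def GTree.map {Γ : Type} {arΓ : Γ → ℕ} (g : σ → Γ) (hg : ∀ f, arΓ (g f) = ar f) :
    GTree σ ar → GTree Γ arΓ
  | .node f ts => .node (g f) (fun i => GTree.map g hg (ts (Fin.cast (hg f) i)))

/-- A morphism of RWTAs. -/
structure RWTA.Morphism {Γ : Type} {arΓ : Γ → ℕ}
    (A₁ : RWTA σ ar M) (A₂ : RWTA Γ arΓ M) where
  stateMap : A₁.Q → A₂.Q
  symMap : σ → Γ
  symRank : ∀ f, arΓ (symMap f) = ar f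
  transMap : ∀ (f : σ) (qs : Fin (ar f) → A₁.Q) (q : A₁.Q), A₁.δ f qs q →
    A₂.δ (symMap f) (fun i => stateMap (qs (Fin.cast (symRank f) i))) (stateMap q)
  weightMap : ∀ q, A₂.ν (stateMap q) = A₁.ν q

/-- Two RWTAs are isomorphic when there are mutually inverse morphisms between them. -/
def RWTA.Isomorphic {Γ : Type} {arΓ : Γ → ℕ}
    (A₁ : RWTA σ ar M) (A₂ : RWTA Γ arΓ M) : Prop :=
  ∃ (μ : A₁.Morphism A₂) (μ' : A₂.Morphism A₁),
    (∀ q, μ'.stateMap (μ.stateMap q) = q) ∧ (∀ q, μ.stateMap (μ'.stateMap q) = q) ∧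
    (∀ f, μ'.symMap (μ.symMap f) = f) ∧ (∀ f, μ.symMap (μ'.symMap f) = f)

/-- The size (number of nodes) of a tree. -/
def GTree.size : GTree σ ar → ℕ
  | .node _ ts => 1 + ∑ i, (ts i).size

/-- The set of subtrees of a tree. -/
def GTree.subTrees : GTree σ ar → Set (GTree σ ar)
  | .node f ts => insert (.node f ts) (⋃ i, (ts i).subTrees)

theorem GTree.subTrees_finite (t : GTree σ ar) : t.subTrees.Finite := by
  induction t with
  | node f ts ih => exact Set.Finite.insert _ (Set.finite_iUnion fun i => ih i)

-- `t.subCount s` is the number of occurrences of `s` as a subtree of `t`,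
-- i.e. `SubTreeSeries_t(s)`.
open Classical in
noncomputable def GTree.subCount : GTree σ ar → GTree σ ar → ℕ
  | .node f ts, s =>
      (if GTree.node f ts = s then 1 else 0) + ∑ i, (ts i).subCount s

/-- Indexing of the symbols of a tree by their position in a prefix traversal
(auxiliary function, threading the position of the root). -/
def GTree.sharpAux : GTree σ ar → ℕ → GTree (σ × ℕ) (fun p => ar p.1)
  | .node f ts, n => .node (f, n) (fun i =>
      (ts i).sharpAux (n + 1 + ∑ j : Fin (ar f), if j.1 < i.1 then (ts j).size else 0))

/-- `t^♯`: the tree `t` with each symbol indexed by its prefix-traversal position. -/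
def GTree.sharp (t : GTree σ ar) : GTree (σ × ℕ) (fun p => ar p.1) := t.sharpAux 0

/-- The map `h` dropping the indexes. -/
def GTree.unsharp : GTree (σ × ℕ) (fun p => ar p.1) → GTree σ ar :=
  GTree.map Prod.fst (fun _ => rfl)

/-- The subtree automaton `A_t` associated with a tree `t`. -/
def subtreeAut (t : GTree σ ar) : RWTA σ ar ℕ where
  Q := {r // r ∈ t.sharp.subTrees}
  fin := (t.sharp.subTrees_finite).to_subtype
  ν := fun _ => 1
  δ := fun f qs q => ∃ n : ℕ,
    (q : GTree (σ × ℕ) (fun p => ar p.1)) = .node (f, n) (fun i => (qs i : GTree (σ × ℕ) (fun p => ar p.1)))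

/-- The equivalence `∼_h` on the states of the subtree automaton. -/
def simH (t : GTree σ ar) : Setoid (subtreeAut t).Q :=
  Setoid.ker (fun r => GTree.unsharp r.1)

/-- The sequential subtree automaton `seq(A_t)` associated with a tree `t`. -/
noncomputable def seqSubtreeAut (t : GTree σ ar) : RWTA σ ar ℕ where
  Q := {r // r ∈ t.subTrees}
  fin := (t.subTrees_finite).to_subtype
  ν := fun r => t.subCount r.1
  δ := fun f qs q => (q : GTree σ ar) = .node f (fun i => (qs i : GTree σ ar))

/-- `SubTreeSet(L)`. -/
def subTreeSet (L : Set (GTree σ ar)) : Set (GTree σ ar) := ⋃ t ∈ L, t.subTrees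

/-- `SubTreeSeries_L`. -/
noncomputable def subSeriesL (L : Set (GTree σ ar)) (s : GTree σ ar) : ℕ :=
  ∑ᶠ t ∈ L, t.subCount s

/-- The sequential subtree automaton `A_L` associated with a finite tree language. -/
noncomputable def langSubtreeAut (L : Set (GTree σ ar)) (hL : L.Finite) : RWTA σ ar ℕ where
  Q := {r // r ∈ subTreeSet L}
  fin := (hL.biUnion fun t _ => t.subTrees_finite).to_subtype
  ν := fun r => subSeriesL L r.1
  δ := fun f qs q => (q : GTree σ ar) = .node f (fun i => (qs i : GTree σ ar))



/-! ### Auxiliary lemmas for `seq_iso_quot` -/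

section Aux

lemma GTree.size_pos (u : GTree σ ar) : 0 < u.size := by
  cases u with | node f ts => rw [GTree.size]; omega

lemma GTree.self_mem_subTrees (u : GTree σ ar) : u ∈ u.subTrees := by
  cases u with | node f ts => exact Set.mem_insert _ _

lemma GTree.child_mem_subTrees (f : σ) (ts : Fin (ar f) → GTree σ ar) (i : Fin (ar f)) :
    ts i ∈ (GTree.node f ts).subTrees :=
  Set.mem_insert_of_mem _ (Set.mem_iUnion.mpr ⟨i, GTree.self_mem_subTrees _⟩)

lemma GTree.subTrees_subset : ∀ (u : GTree σ ar) {s : GTree σ ar},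
    s ∈ u.subTrees → s.subTrees ⊆ u.subTrees := by
  intro u
  induction u with
  | node f ts ih =>
    intro s hs
    rcases Set.mem_insert_iff.mp hs with rfl | hs
    · exact subset_rfl
    · obtain ⟨i, hi⟩ := Set.mem_iUnion.mp hs
      exact (ih i hi).trans fun x hx =>
        Set.mem_insert_of_mem _ (Set.mem_iUnion.mpr ⟨i, hx⟩)

lemma GTree.child_mem_of_node_mem {u : GTree σ ar} {f : σ} {ts : Fin (ar f) → GTree σ ar}
    (h : GTree.node f ts ∈ u.subTrees) (i : Fin (ar f)) : ts i ∈ u.subTrees :=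
  GTree.subTrees_subset u h (GTree.child_mem_subTrees f ts i)

variable {Γ : Type} {arΓ : Γ → ℕ}

lemma GTree.map_mem_subTrees (g : σ → Γ) (hg : ∀ f, arΓ (g f) = ar f) :
    ∀ (u : GTree σ ar) {s : GTree σ ar}, s ∈ u.subTrees →
      s.map g hg ∈ (u.map g hg).subTrees := by
  intro u
  induction u with
  | node f ts ih =>
    intro s hs
    rcases Set.mem_insert_iff.mp hs with rfl | hs
    · exact GTree.self_mem_subTrees _
    · obtain ⟨i, hi⟩ := Set.mem_iUnion.mp hs
      have h1 : (s.map g hg) ∈ ((ts i).map g hg).subTrees := ih i hi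
      rw [GTree.map]
      refine Set.mem_insert_of_mem _ (Set.mem_iUnion.mpr ⟨Fin.cast (hg f).symm i, ?_⟩)
      exact h1

lemma GTree.exists_preimage (g : σ → Γ) (hg : ∀ f, arΓ (g f) = ar f) :
    ∀ (u : GTree σ ar) {r : GTree Γ arΓ}, r ∈ (u.map g hg).subTrees →
      ∃ s ∈ u.subTrees, s.map g hg = r := by
  intro u
  induction u with
  | node f ts ih =>
    intro r hr
    rw [GTree.map] at hr
    rcases Set.mem_insert_iff.mp hr with rfl | hr
    · exact ⟨GTree.node f ts, GTree.self_mem_subTrees _, rfl⟩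
    · obtain ⟨j, hj⟩ := Set.mem_iUnion.mp hr
      obtain ⟨s, hs, hmap⟩ := ih (Fin.cast (hg f) j) hj
      exact ⟨s, GTree.subTrees_subset _ (GTree.child_mem_subTrees f ts _) hs, hmap⟩

lemma GTree.unsharp_node (p : σ × ℕ) (rs : Fin (ar p.1) → GTree (σ × ℕ) (fun q => ar q.1)) :
    GTree.unsharp (GTree.node p rs) = GTree.node p.1 (fun i => (rs i).unsharp) := rfl

lemma GTree.unsharp_sharpAux : ∀ (u : GTree σ ar) (n : ℕ), (u.sharpAux n).unsharp = u := by
  intro u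
  induction u with
  | node f ts ih =>
    intro n
    rw [GTree.sharpAux, GTree.unsharp_node]
    congr 1
    funext i
    exact ih i _

/-- The prefix index at the root of an indexed tree. -/
def idxOf : GTree (σ × ℕ) (fun p => ar p.1) → ℕ
  | .node p _ => p.2

lemma prefix_le {k : ℕ} (s : Fin k → ℕ) (i : Fin k) :
    (∑ j, if j.1 < i.1 then s j else 0) + s i ≤ ∑ j, s j := by
  classical
  rw [← Finset.sum_filter]
  rw [show (∑ j ∈ Finset.univ.filter (fun j : Fin k => j.1 < i.1), s j) + s i
      = ∑ j ∈ insert i (Finset.univ.filter (fun j : Fin k => j.1 < i.1)), s j by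
    rw [Finset.sum_insert (by simp), add_comm]]
  exact Finset.sum_le_sum_of_subset (Finset.subset_univ _)

lemma prefix_mono {k : ℕ} (s : Fin k → ℕ) {i j : Fin k} (hij : i.1 < j.1) :
    (∑ l, if l.1 < i.1 then s l else 0) + s i ≤ ∑ l, if l.1 < j.1 then s l else 0 := by
  classical
  rw [← Finset.sum_filter, ← Finset.sum_filter]
  rw [show (∑ l ∈ Finset.univ.filter (fun l : Fin k => l.1 < i.1), s l) + s i
      = ∑ l ∈ insert i (Finset.univ.filter (fun l : Fin k => l.1 < i.1)), s l by
    rw [Finset.sum_insert (by simp), add_comm]]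
  refine Finset.sum_le_sum_of_subset ?_
  intro x hx
  simp only [Finset.mem_insert, Finset.mem_filter, Finset.mem_univ, true_and] at hx ⊢
  rcases hx with rfl | hx
  · exact hij
  · omega

lemma idx_range : ∀ (u : GTree σ ar) (n : ℕ) {r}, r ∈ (u.sharpAux n).subTrees →
    n ≤ idxOf r ∧ idxOf r < n + u.size := by
  intro u
  induction u with
  | node f ts ih =>
    intro n r hr
    rw [GTree.sharpAux] at hr
    rw [GTree.subTrees] at hr
    rcases Set.mem_insert_iff.mp hr with rfl | hr
    · refine ⟨le_refl _, ?_⟩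
      have := GTree.size_pos (GTree.node f ts)
      simp only [idxOf]
      omega
    · obtain ⟨i, hi⟩ := Set.mem_iUnion.mp hr
      obtain ⟨h1, h2⟩ := ih i _ hi
      have hp := prefix_le (fun j => (ts j).size) i
      have hsz : (GTree.node f ts).size = 1 + ∑ j, (ts j).size := rfl
      refine ⟨by omega, by omega⟩

lemma subtrees_disjoint (f : σ) (ts : Fin (ar f) → GTree σ ar) (n : ℕ) :
    Pairwise (Function.onFun Disjoint (fun i =>
      ((ts i).sharpAux (n + 1 + ∑ j, if j.1 < i.1 then (ts j).size else 0)).subTrees)) := by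
  intro i j hij
  rw [Function.onFun, Set.disjoint_left]
  intro r hri hrj
  obtain ⟨hi1, hi2⟩ := idx_range (ts i) _ hri
  obtain ⟨hj1, hj2⟩ := idx_range (ts j) _ hrj
  rcases Nat.lt_or_ge i.1 j.1 with h | h
  · have := prefix_mono (fun l => (ts l).size) h
    beta_reduce at this
    omega
  · have hlt : j.1 < i.1 := lt_of_le_of_ne h (fun e => hij (Fin.ext e.symm))
    have := prefix_mono (fun l => (ts l).size) hlt
    beta_reduce at this
    omega

open Classical in
lemma count_lemma (s : GTree σ ar) : ∀ (u : GTree σ ar) (n : ℕ),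
    (∑ᶠ r ∈ (u.sharpAux n).subTrees, (if r.unsharp = s then 1 else 0 : ℕ)) = u.subCount s := by
  intro u
  induction u with
  | node f ts ih =>
    intro n
    rw [GTree.sharpAux, GTree.subTrees]
    have hw : GTree.node (f, n) (fun i => (ts i).sharpAux
          (n + 1 + ∑ j, if j.1 < i.1 then (ts j).size else 0)) ∉
        ⋃ i, ((ts i).sharpAux (n + 1 + ∑ j, if j.1 < i.1 then (ts j).size else 0)).subTrees := by
      intro hmem
      obtain ⟨i, hi⟩ := Set.mem_iUnion.mp hmem
      obtain ⟨h1, _⟩ := idx_range (ts i) _ hi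
      simp only [idxOf] at h1
      omega
    rw [finsum_mem_insert _ hw (Set.finite_iUnion fun i => GTree.subTrees_finite _)]
    rw [finsum_mem_iUnion (subtrees_disjoint f ts n) (fun i => GTree.subTrees_finite _)]
    rw [finsum_eq_sum_of_fintype]
    have hws : (GTree.node (f, n) (fun i => (ts i).sharpAux
        (n + 1 + ∑ j, if j.1 < i.1 then (ts j).size else 0))).unsharp = GTree.node f ts :=
      GTree.unsharp_sharpAux (GTree.node f ts) n
    rw [GTree.subCount, hws]
    congr 1
    exact Finset.sum_congr rfl fun i _ => ih i _

lemma unsharp_mem {t : GTree σ ar} {r : GTree (σ × ℕ) (fun p => ar p.1)}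
    (h : r ∈ t.sharp.subTrees) : r.unsharp ∈ t.subTrees := by
  have h1 := GTree.map_mem_subTrees Prod.fst (fun _ => rfl) t.sharp h
  rwa [show t.sharp.map Prod.fst (fun _ => rfl) = t from GTree.unsharp_sharpAux t 0] at h1

lemma exists_lift (t : GTree σ ar) {s : GTree σ ar} (hs : s ∈ t.subTrees) :
    ∃ r ∈ t.sharp.subTrees, r.unsharp = s := by
  have h1 : s ∈ (t.sharp.map Prod.fst (fun _ => rfl)).subTrees := by
    rwa [show t.sharp.map Prod.fst (fun _ => rfl) = t from GTree.unsharp_sharpAux t 0]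
  exact GTree.exists_preimage Prod.fst (fun _ => rfl) t.sharp h1

/-- A chosen sharp representative of a subtree. -/
noncomputable def liftS (t : GTree σ ar) (s : (seqSubtreeAut t).Q) : (subtreeAut t).Q :=
  ⟨(exists_lift t s.2).choose, (exists_lift t s.2).choose_spec.1⟩

lemma liftS_unsharp (t : GTree σ ar) (s : (seqSubtreeAut t).Q) :
    (liftS t s).1.unsharp = s.1 :=
  (exists_lift t s.2).choose_spec.2

open Classical in
lemma core_count (t : GTree σ ar) (s : GTree σ ar) :
    (∑ᶠ q ∈ {q : (subtreeAut t).Q | q.1.unsharp = s}, (1 : ℕ)) = t.subCount s := by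
  have himg : Subtype.val '' {q : (subtreeAut t).Q | q.1.unsharp = s}
      = {r ∈ t.sharp.subTrees | r.unsharp = s} := by
    ext r
    constructor
    · rintro ⟨⟨r', hr'⟩, hq, rfl⟩
      exact ⟨hr', hq⟩
    · rintro ⟨h1, h2⟩
      exact ⟨⟨r, h1⟩, h2, rfl⟩
  have h1 : (∑ᶠ r ∈ {r ∈ t.sharp.subTrees | r.unsharp = s}, (1 : ℕ))
      = ∑ᶠ q ∈ {q : (subtreeAut t).Q | q.1.unsharp = s}, (1 : ℕ) := by
    rw [← himg]
    exact finsum_mem_image (Set.injOn_of_injective Subtype.val_injective)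
  rw [← h1]
  have h2 : (∑ᶠ r ∈ t.sharp.subTrees, (if r.unsharp = s then 1 else 0 : ℕ))
      = ∑ᶠ r ∈ {r ∈ t.sharp.subTrees | r.unsharp = s},
          (if r.unsharp = s then 1 else 0 : ℕ) := by
    apply (finsum_mem_inter_support_eq _ _ _ ?_).symm
    ext r
    simp only [Set.mem_inter_iff, Set.mem_setOf_eq, Function.mem_support]
    constructor
    · rintro ⟨⟨h1, h2⟩, h3⟩
      exact ⟨h1, h3⟩
    · rintro ⟨h1, h3⟩
      refine ⟨⟨h1, ?_⟩, h3⟩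
      by_contra h
      rw [if_neg h] at h3
      exact h3 rfl
  have h3 := count_lemma s t 0
  rw [show t.sharpAux 0 = t.sharp from rfl] at h3
  rw [← h3, h2]
  exact finsum_mem_congr rfl fun x hx => (if_pos hx.2).symm

end Aux

theorem seq_iso_quot {σ : Type} {ar : σ → ℕ} (t : GTree σ ar) :
    RWTA.Isomorphic (seqSubtreeAut t) ((subtreeAut t).quot (simH t)) := by
  classical
  -- the map from the quotient to the sequential automaton
  have hker : ∀ a b : (subtreeAut t).Q, (simH t).r a b → a.1.unsharp = b.1.unsharp :=
    fun a b h => h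
  refine ⟨
    { stateMap := fun s => Quotient.mk (simH t) (liftS t s)
      symMap := id
      symRank := fun _ => rfl
      transMap := ?_
      weightMap := ?_ },
    { stateMap := Quotient.lift
        (fun r : (subtreeAut t).Q => (⟨r.1.unsharp, unsharp_mem r.2⟩ : (seqSubtreeAut t).Q))
        (fun a b h => Subtype.ext (hker a b h))
      symMap := id
      symRank := fun _ => rfl
      transMap := ?_
      weightMap := ?_ },
    ?_, ?_, fun _ => rfl, fun _ => rfl⟩
  · -- transMap : seq → quot
    intro f qs q hδ
    have hq : q.1 = GTree.node f (fun i => (qs i).1) := hδ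
    cases hval : (liftS t q).1 with
    | node p rs =>
      obtain ⟨f', n⟩ := p
      have hu : (GTree.node (f', n) rs).unsharp = q.1 := by
        rw [← hval]; exact liftS_unsharp t q
      rw [GTree.unsharp_node, hq] at hu
      have hf : f' = f := by injection hu
      subst hf
      have hch : ∀ i, (rs i).unsharp = (qs i).1 := by
        intro i
        have h2 : (fun i => (rs i).unsharp) = fun i => (qs i).1 := by
          injection hu with h1 h2
        exact congrFun h2 i
      have hmem : ∀ i, rs i ∈ t.sharp.subTrees := by
        intro i
        have : GTree.node (f', n) rs ∈ t.sharp.subTrees := hval ▸ (liftS t q).2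
        exact GTree.child_mem_of_node_mem this i
      refine ⟨fun i => ⟨rs i, hmem i⟩, liftS t q, fun i => ?_, rfl, ⟨n, ?_⟩⟩
      · exact Quotient.sound (show (rs i).unsharp = (liftS t (qs i)).1.unsharp by
          rw [hch i, liftS_unsharp])
      · exact hval
  · -- weightMap : seq → quot
    intro q
    show (∑ᶠ r ∈ {r : (subtreeAut t).Q | Quotient.mk (simH t) r = Quotient.mk (simH t) (liftS t q)},
        (subtreeAut t).ν r) = t.subCount q.1
    have hset : {r : (subtreeAut t).Q | Quotient.mk (simH t) r = Quotient.mk (simH t) (liftS t q)}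
        = {r : (subtreeAut t).Q | r.1.unsharp = q.1} := by
      ext r
      simp only [Set.mem_setOf_eq]
      rw [Quotient.eq]
      show r.1.unsharp = (liftS t q).1.unsharp ↔ _
      rw [liftS_unsharp]
    rw [hset]
    exact core_count t q.1
  · -- transMap : quot → seq
    intro f Cs C hδ
    obtain ⟨qs, q, hqs, hq, n, heq⟩ := hδ
    subst hq
    show (Quotient.lift _ _ (Quotient.mk (simH t) q) : (seqSubtreeAut t).Q).1
      = GTree.node f fun i => (Quotient.lift _ _ (Cs (Fin.cast rfl i)) : (seqSubtreeAut t).Q).1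
    simp only [← hqs, Quotient.lift_mk]
    show q.1.unsharp = _
    rw [heq, GTree.unsharp_node]
    rfl
  · -- weightMap : quot → seq
    intro C
    induction C using Quotient.ind with
    | _ r =>
      show t.subCount r.1.unsharp
        = ∑ᶠ q ∈ {q : (subtreeAut t).Q | Quotient.mk (simH t) q = Quotient.mk (simH t) r},
            (subtreeAut t).ν q
      have hset : {q : (subtreeAut t).Q | Quotient.mk (simH t) q = Quotient.mk (simH t) r}
          = {q : (subtreeAut t).Q | q.1.unsharp = r.1.unsharp} := by
        ext q
        simp only [Set.mem_setOf_eq]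
        rw [Quotient.eq]
        exact Iff.rfl
      rw [hset]
      exact (core_count t r.1.unsharp).symm
  · -- μ' ∘ μ = id
    intro q
    exact Subtype.ext (liftS_unsharp t q)
  · -- μ ∘ μ' = id
    intro C
    induction C using Quotient.ind with
    | _ r =>
      exact Quotient.sound (show (liftS t ⟨r.1.unsharp, unsharp_mem r.2⟩).1.unsharp
        = r.1.unsharp from liftS_unsharp t _)
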